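/- For all complex $s$ with $\Re s > 2$, $\sum_{n=1}^{\infty} (-1)^{n-1} \sigma(n)/n^s = \left(1 - \frac{6}{2^s} + \frac{4}{2^{2s}}\right)\zeta(s)\zeta(s-1)$. -/

import Mathlib

open scoped BigOperators ArithmeticFunction
open ArithmeticFunction LSeries
open scoped ArithmeticFunction.sigma ArithmeticFunction.zeta

lemma sigma_two_mul_eq (k : ℕ) :
    (σ 1 (2 * k) : ℂ) = 3 * (σ 1 k : ℂ) - 2 * (if 2 ∣ k then (σ 1 (k / 2) : ℂ) else 0) := by
  rcases eq_or_ne k 0 with rfl | hk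
  · simp
  · have h2 : Nat.Prime 2 := Nat.prime_two
    set v := k.factorization 2 with hv
    set u := k / 2 ^ v with hu
    have hk' : k = 2 ^ v * u := (Nat.ordProj_mul_ordCompl_eq_self k 2).symm
    have hcop : Nat.Coprime 2 u := Nat.coprime_ordCompl h2 hk
    have hσu : ∀ i, (σ 1 (2 ^ i * u) : ℂ) = (2 ^ (i + 1) - 1) * (σ 1 u : ℂ) := by
      intro i
      rw [isMultiplicative_sigma.map_mul_of_coprime (Nat.Coprime.pow_left _ hcop),
        sigma_one_apply_prime_pow h2]
      have : (1 : ℕ) ≤ 2 ^ (i + 1) := Nat.one_le_two_pow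
      push_cast [this]
      rw [geom_sum_eq (by norm_num : (2:ℂ) ≠ 1)]
      norm_num
    rcases Nat.eq_zero_or_pos v with hv0 | hvpos
    · have hnd : ¬ 2 ∣ k := by
        intro hdvd
        have := (Nat.Prime.factorization_pos_of_dvd h2 hk hdvd)
        omega
      have hku : k = u := by rw [hk', hv0]; ring
      rw [if_neg hnd, hku, show 2 * u = 2 ^ 1 * u by ring, hσu 1,
        show (u : ℕ) = 2 ^ 0 * u by ring, hσu 0]
      push_cast
      ring
    · obtain ⟨j, hj⟩ : ∃ j, v = j + 1 := ⟨v - 1, by omega⟩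
      have hdvd : 2 ∣ k := by
        rw [hk', hj]
        exact Dvd.dvd.mul_right (dvd_pow_self 2 (by omega)) u
      have hk2 : k / 2 = 2 ^ j * u := by
        rw [hk', hj, pow_succ, mul_comm (2^j) 2, mul_assoc]
        exact Nat.mul_div_cancel_left _ (by norm_num)
      rw [if_pos hdvd, hk2, hσu j, show 2 * k = 2 ^ (j + 2) * u by rw [hk', hj]; ring,
        hσu (j+2), hk', hj, hσu (j+1)]
      push_cast
      ring

open scoped LSeries.notation

/-- For `Re s > 2`,
`∑ (-1)^(n-1) σ(n)/n^s = (1 - 6/2^s + 4/2^(2s)) ζ(s) ζ(s-1)`. -/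
theorem alternating_dirichlet_series_sigma (s : ℂ) (hs : 2 < s.re) :
    ∑' n : ℕ+, (-1 : ℂ) ^ ((n : ℕ) - 1) * (ArithmeticFunction.sigma 1 n : ℂ) / (n : ℂ) ^ s =
      (1 - 6 / (2 : ℂ) ^ s + 4 / (2 : ℂ) ^ (2 * s)) * riemannZeta s * riemannZeta (s - 1) := by
  have hs1 : 1 < s.re := by linarith
  have hs1' : 1 < (s - 1).re := by rw [Complex.sub_re, Complex.one_re]; linarith
  have hc0 : (2 : ℂ) ^ s ≠ 0 := by
    simp [Complex.cpow_eq_zero_iff]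
  have hmulpow : ∀ a k : ℕ, (((a * k : ℕ) : ℂ)) ^ s = ((a : ℂ)) ^ s * ((k : ℂ)) ^ s := by
    intro a k
    push_cast
    exact Complex.natCast_mul_natCast_cpow a k s
  -- L-series of pow 1
  have hterm_pow : ∀ n : ℕ,
      LSeries.term (↗((ArithmeticFunction.pow 1 : ArithmeticFunction ℕ) : ArithmeticFunction ℂ)) s n
        = LSeries.term 1 (s - 1) n := by
    intro n
    rcases eq_or_ne n 0 with rfl | hn
    · rw [LSeries.term_zero, LSeries.term_zero]
    · rw [LSeries.term_of_ne_zero hn, LSeries.term_of_ne_zero hn]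
      have hn' : (n : ℂ) ≠ 0 := Nat.cast_ne_zero.mpr hn
      have hns : (n : ℂ) ^ s ≠ 0 := by simp [Complex.cpow_eq_zero_iff, hn']
      rw [Complex.cpow_sub _ _ hn', Complex.cpow_one]
      simp only [natCoe_apply, pow_apply, Pi.one_apply,
        if_neg (by simp [hn] : ¬(1 = 0 ∧ n = 0)), pow_one]
      field_simp
  have hpow : LSeriesHasSum
      (↗((ArithmeticFunction.pow 1 : ArithmeticFunction ℕ) : ArithmeticFunction ℂ)) s
      (riemannZeta (s - 1)) := by
    have h1 : HasSum (fun n ↦ LSeries.term 1 (s - 1) n) (riemannZeta (s - 1)) :=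
      LSeriesHasSum_one hs1'
    have h2 : HasSum (fun n ↦ LSeries.term
        (↗((ArithmeticFunction.pow 1 : ArithmeticFunction ℕ) : ArithmeticFunction ℂ)) s n)
        (riemannZeta (s - 1)) := by simp_rw [hterm_pow]; exact h1
    exact h2
  have hζ : LSeriesHasSum (↗((ζ : ArithmeticFunction ℕ) : ArithmeticFunction ℂ)) s
      (riemannZeta s) := by
    have h1 := ArithmeticFunction.LSeriesHasSum_zeta (s := s) hs1
    have heq : ↗(((ζ : ArithmeticFunction ℕ)) : ArithmeticFunction ℂ)
        = ↗(ζ : ArithmeticFunction ℕ) := by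
      funext n; simp [natCoe_apply]
    rw [heq]
    exact h1
  have hσ : LSeriesHasSum (↗(σ 1 : ArithmeticFunction ℕ)) s
      (riemannZeta s * riemannZeta (s - 1)) := by
    have h1 := ArithmeticFunction.LSeriesHasSum_mul hζ hpow
    have heq : ↗((((ζ : ArithmeticFunction ℕ) : ArithmeticFunction ℂ))
          * ((ArithmeticFunction.pow 1 : ArithmeticFunction ℕ) : ArithmeticFunction ℂ))
        = ↗(σ 1 : ArithmeticFunction ℕ) := by
      rw [← natCoe_mul, zeta_mul_pow_eq_sigma]
      funext n
      simp [natCoe_apply]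
    rwa [heq] at h1
  set F := riemannZeta s * riemannZeta (s - 1) with hF
  set T : ℕ → ℂ := LSeries.term (↗(σ 1 : ArithmeticFunction ℕ)) s with hTdef
  have hT : HasSum T F := hσ
  have hTsum : Summable T := hT.summable
  have hTF : ∑' n, T n = F := hT.tsum_eq
  have hT0 : T 0 = 0 := LSeries.term_zero ..
  have hTn : ∀ {n : ℕ}, n ≠ 0 → T n = ((σ 1 n : ℕ) : ℂ) / (n : ℂ) ^ s :=
    fun hn ↦ LSeries.term_of_ne_zero hn _ _
  have hinj2 : Function.Injective (fun k : ℕ ↦ 2 * k) := fun a b hab ↦ by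
    have : 2 * a = 2 * b := hab
    omega
  have hinj2' : Function.Injective (fun k : ℕ ↦ 2 * k + 1) := fun a b hab ↦ by
    have : 2 * a + 1 = 2 * b + 1 := hab
    omega
  have hT2 : Summable (fun k ↦ T (2 * k)) := hTsum.comp_injective hinj2
  have hT2' : Summable (fun k ↦ T (2 * k + 1)) := hTsum.comp_injective hinj2'
  have hsplitT : (∑' k, T (2 * k)) + ∑' k, T (2 * k + 1) = F := by
    rw [tsum_even_add_odd hT2 hT2', hTF]
  set h : ℕ → ℂ :=
    fun k ↦ if 2 ∣ k then ((σ 1 (k / 2) : ℕ) : ℂ) / ((2 * k : ℕ) : ℂ) ^ s else 0 with hhdef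
  have hP : ∀ k, T (2 * k) = 3 * ((2 : ℂ) ^ s)⁻¹ * T k - 2 * h k := by
    intro k
    rcases eq_or_ne k 0 with rfl | hk
    · simp [hT0, hhdef]
    · have h2k : (2 * k : ℕ) ≠ 0 := by omega
      have hks : ((k : ℂ)) ^ s ≠ 0 := by
        simp [Complex.cpow_eq_zero_iff, Nat.cast_ne_zero.mpr hk]
      rw [hTn h2k, hTn hk, hhdef]
      simp only
      rw [sigma_two_mul_eq k, hmulpow 2 k]
      by_cases hdk : 2 ∣ k
      · rw [if_pos hdk, if_pos hdk]
        push_cast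
        field_simp
        try ring
      · rw [if_neg hdk, if_neg hdk]
        push_cast
        field_simp
        try ring
  have hh : Summable h := by
    have h1 : Summable (fun k ↦ (3 * ((2 : ℂ) ^ s)⁻¹ * T k - T (2 * k)) / 2) :=
      ((hTsum.mul_left _).sub hT2).div_const 2
    refine h1.congr fun k ↦ ?_
    rw [hP k]; ring
  have hEeq : ∑' k, T (2 * k) = 3 * ((2 : ℂ) ^ s)⁻¹ * F - 2 * ∑' k, h k := by
    calc ∑' k, T (2 * k) = ∑' k, (3 * ((2 : ℂ) ^ s)⁻¹ * T k - 2 * h k) := tsum_congr hP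
      _ = (∑' k, 3 * ((2 : ℂ) ^ s)⁻¹ * T k) - ∑' k, 2 * h k :=
          Summable.tsum_sub (hTsum.mul_left _) (hh.mul_left _)
      _ = 3 * ((2 : ℂ) ^ s)⁻¹ * F - 2 * ∑' k, h k := by
          rw [tsum_mul_left, tsum_mul_left, hTF]
  have hheven : ∀ j, h (2 * j) = ((2 : ℂ) ^ s * (2 : ℂ) ^ s)⁻¹ * T j := by
    intro j
    rcases eq_or_ne j 0 with rfl | hj
    · simp [hhdef, hT0]
    · have hjs : ((j : ℂ)) ^ s ≠ 0 := by
        simp [Complex.cpow_eq_zero_iff, Nat.cast_ne_zero.mpr hj]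
      rw [hhdef]
      simp only
      rw [if_pos ⟨j, rfl⟩, Nat.mul_div_cancel_left j (by norm_num), hTn hj,
        hmulpow 2 (2 * j), hmulpow 2 j]
      push_cast
      rw [div_eq_iff (by simp [hc0, hjs]), mul_comm]
      field_simp
      try ring
  have hhodd : ∀ j, h (2 * j + 1) = 0 := fun j ↦ if_neg (by omega)
  have hhe : Summable fun j ↦ h (2 * j) := hh.comp_injective hinj2
  have hho : Summable fun j ↦ h (2 * j + 1) := hh.comp_injective hinj2'
  have hHeq : ∑' k, h k = ((2 : ℂ) ^ s * (2 : ℂ) ^ s)⁻¹ * F := by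
    rw [← tsum_even_add_odd hhe hho]
    have h2 : ∑' j, h (2 * j + 1) = 0 := by simp_rw [hhodd]; exact tsum_zero
    rw [h2, add_zero]
    calc ∑' j, h (2 * j) = ∑' j, ((2 : ℂ) ^ s * (2 : ℂ) ^ s)⁻¹ * T j := tsum_congr hheven
      _ = _ := by rw [tsum_mul_left, hTF]
  set g : ℕ → ℂ := fun n ↦ (-1 : ℂ) ^ (n - 1) * T n with hg
  have hge : ∀ k, g (2 * k) = -T (2 * k) := by
    intro k
    rcases eq_or_ne k 0 with rfl | hk
    · simp [hg, hT0]
    · have hodd : Odd (2 * k - 1) := ⟨k - 1, by omega⟩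
      rw [hg]
      simp only
      rw [hodd.neg_one_pow, neg_one_mul]
  have hgo : ∀ k, g (2 * k + 1) = T (2 * k + 1) := by
    intro k
    have heven : Even (2 * k + 1 - 1) := ⟨k, by omega⟩
    rw [hg]
    simp only
    rw [heven.neg_one_pow, one_mul]
  have hge' : Summable fun k ↦ g (2 * k) := hT2.neg.congr fun k ↦ (hge k).symm
  have hgo' : Summable fun k ↦ g (2 * k + 1) := hT2'.congr fun k ↦ (hgo k).symm
  have hLHS : (∑' n : ℕ+, (-1 : ℂ) ^ ((n : ℕ) - 1) * ((σ 1 n : ℕ) : ℂ) / (n : ℂ) ^ s)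
      = ∑' n : ℕ, g n := by
    rw [← Function.Injective.tsum_eq (g := ((↑) : ℕ+ → ℕ)) PNat.coe_injective (f := g) ?_]
    · refine tsum_congr fun n ↦ ?_
      rw [hg]
      simp only
      rw [hTn n.pos.ne', mul_div_assoc]
    · intro x hx
      rcases eq_or_ne x 0 with rfl | hx0
      · simp [hg, hT0] at hx
      · exact ⟨⟨x, Nat.pos_of_ne_zero hx0⟩, rfl⟩
  have hsplitg : ∑' n : ℕ, g n = -(∑' k, T (2 * k)) + (F - ∑' k, T (2 * k)) := by
    rw [← tsum_even_add_odd hge' hgo']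
    have h1 : ∑' k, g (2 * k) = -(∑' k, T (2 * k)) := by
      simp_rw [hge]; exact tsum_neg
    have h2 : ∑' k, g (2 * k + 1) = F - ∑' k, T (2 * k) := by
      simp_rw [hgo]
      rw [eq_sub_iff_add_eq, add_comm]
      exact hsplitT
    rw [h1, h2]
  rw [hLHS, hsplitg, hEeq, hHeq]
  rw [show (2 : ℂ) ^ (2 * s) = (2 : ℂ) ^ s * (2 : ℂ) ^ s by
    rw [two_mul, Complex.cpow_add _ _ (by norm_num : (2 : ℂ) ≠ 0)]]
  rw [hF]
  field_simp
  ring
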